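/- If P_{S|X}(1|x) = (1 + exp(θ₀ + ⟨θ, x⟩))⁻¹ for all x ∈ 𝒳 and P_{S|Y}(1|y) = (1 + exp(γ₀ + γ₁y))⁻¹ for y ∈ {0,1}, then for every f ∈ 𝓛(P_{X|S=0}), Δ_λ(f) = λ₂·Σᵢ₌₁ᵈ θᵢ·E[f(X)Xᵢ | S=0] + λ₄·γ₁·E[g(Y)·Y | S=0], where g(y) = E[f(X) | Y=y, S=0]. -/

import Mathlib

open Filter Topology

/-- Kullback–Leibler divergence between distributions on a finite set. -/
noncomputable def KLdiv {α : Type*} [Fintype α] (P Q : α → ℝ) : ℝ :=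
  ∑ a, P a * Real.log (P a / Q a)

/-- The objective `L_λ` evaluated at the perturbed distribution
`P̃_{X|S=0}(x) = P0(x)(1+εf(x))`, with `P̃_{Y|S=0} = W ∘ P̃_{X|S=0}`.
At `ε = 0` this is `L_λ(P_{X|S=0})`. -/
noncomputable def Lobj {𝒳 : Type*} [Fintype 𝒳]
    (P0 P1 : 𝒳 → ℝ) (W : 𝒳 → Bool → ℝ) (Q0 Q1 : Bool → ℝ)
    (l1 l2 l3 l4 : ℝ) (f : 𝒳 → ℝ) (ε : ℝ) : ℝ :=
  l1 * KLdiv (fun x => P0 x * (1 + ε * f x)) P0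
    + l2 * KLdiv (fun x => P0 x * (1 + ε * f x)) P1
    + l3 * KLdiv (fun y => ∑ x, P0 x * (1 + ε * f x) * W x y) Q0
    + l4 * KLdiv (fun y => ∑ x, P0 x * (1 + ε * f x) * W x y) Q1

lemma klterm_deriv (c b q : ℝ) (hc : 0 < c) (hq : 0 < q) :
    HasDerivAt (fun t : ℝ => (c + t * b) * Real.log ((c + t * b) / q))
      (b * (Real.log (c / q) + 1)) 0 := by
  have hlin : HasDerivAt (fun t : ℝ => c + t * b) b 0 := by
    simpa using ((hasDerivAt_id (0:ℝ)).mul_const b).const_add c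
  have hinner : HasDerivAt (fun t : ℝ => (c + t * b) / q) (b / q) 0 :=
    hlin.div_const q
  have h0 : c / q ≠ 0 := ne_of_gt (div_pos hc hq)
  have hlog : HasDerivAt (fun t : ℝ => Real.log ((c + t * b) / q))
      ((c / q)⁻¹ * (b / q)) 0 := by
    have h1 : HasDerivAt Real.log (c / q)⁻¹ ((c + (0:ℝ) * b) / q) := by
      simpa using Real.hasDerivAt_log h0
    exact h1.comp 0 hinner
  have h2 := hlin.fun_mul hlog
  refine h2.congr_deriv ?_
  simp only [zero_mul, add_zero]
  field_simp

lemma logratio (pf pt a b t : ℝ) (hpf : 0 < pf) (hpt : 0 < pt) (ha : 0 < a) (hb : 0 < b)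
    (h : pt * b / (pf * a + pt * b) = (1 + Real.exp t)⁻¹) :
    Real.log (a / b) = t + (Real.log pt - Real.log pf) := by
  have hden : 0 < pf * a + pt * b := by positivity
  have he : 0 < Real.exp t := Real.exp_pos t
  have hexp : Real.exp t = (pf * a) / (pt * b) := by
    have h1 : (1 : ℝ) + Real.exp t > 0 := by positivity
    field_simp at h ⊢
    nlinarith [h]
  have h2 := congrArg Real.log hexp
  rw [Real.log_exp, Real.log_div (by positivity) (by positivity),
    Real.log_mul hpf.ne' ha.ne', Real.log_mul hpt.ne' hb.ne'] at h2
  rw [Real.log_div ha.ne' hb.ne']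
  linarith

/-- Example 1 of the paper: if
`P_{S|X}(1|x) = (1 + exp(θ₀ + ⟨θ,x⟩))⁻¹` for all `x ∈ 𝒳` and
`P_{S|Y}(1|y) = (1 + exp(γ₀ + γ₁y))⁻¹` for `y ∈ {0,1}`, then for every
`f ∈ 𝓛(P_{X|S=0})`,
`Δ_λ(f) = λ₂·∑ᵢ θᵢ·E[f(X)·Xᵢ|S=0] + λ₄·γ₁·E[g(Y)·Y|S=0]`, where
`g(y) = E[f(X)|Y=y,S=0]` and `Δ_λ(f) = lim_{ε→0⁺}(L_λ(P̃_{X|S=0}) − L_λ(P_{X|S=0}))/ε`.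
Here `𝒳` is a finite subset of `ℝᵈ` realized by an injective feature map
`v : 𝒳 → (Fin d → ℝ)` with `⟨θ,x⟩ = ∑ i, θ i * v x i`, `S = 𝒴 = Bool`
(`false ↔ 0`, `true ↔ 1`, so `Y` as a real number is `if y then 1 else 0`),
`PS` is the marginal of `S` (positive), `P0 = P_{X|S=0}`, `P1 = P_{X|S=1}` (full support),
`W x y = W_{Y|X}(y|x)` the channel of the Markov chain `S → X → Y`,
`Q0 = P_{Y|S=0} = W ∘ P0`, `Q1 = P_{Y|S=1} = W ∘ P1` (full support), and the posteriors
are given by Bayes' rule: `P_{S|X}(1|x) = PS(1)·P1(x)/(PS(0)·P0(x) + PS(1)·P1(x))`,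
`P_{S|Y}(1|y) = PS(1)·Q1(y)/(PS(0)·Q0(y) + PS(1)·Q1(y))`. -/
theorem stmt8
    {d : ℕ} {𝒳 : Type*} [Fintype 𝒳]
    (v : 𝒳 → Fin d → ℝ) (hv : Function.Injective v)
    (PS : Bool → ℝ) (hPSpos : ∀ s, 0 < PS s) (hPSsum : PS false + PS true = 1)
    (P0 P1 : 𝒳 → ℝ)
    (hP0pos : ∀ x, 0 < P0 x) (hP0sum : ∑ x, P0 x = 1)
    (hP1pos : ∀ x, 0 < P1 x) (hP1sum : ∑ x, P1 x = 1)
    (W : 𝒳 → Bool → ℝ)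
    (hWnn : ∀ x y, 0 ≤ W x y) (hWsum : ∀ x, W x false + W x true = 1)
    (Q0 Q1 : Bool → ℝ)
    (hQ0 : ∀ y, Q0 y = ∑ x, P0 x * W x y) (hQ1 : ∀ y, Q1 y = ∑ x, P1 x * W x y)
    (hQ0pos : ∀ y, 0 < Q0 y) (hQ1pos : ∀ y, 0 < Q1 y)
    (l1 l2 l3 l4 : ℝ)
    (hl1 : 0 ≤ l1) (hl2 : 0 ≤ l2) (hl3 : 0 ≤ l3) (hl4 : 0 ≤ l4)
    (PSgX1 : 𝒳 → ℝ)
    (hPSgX1 : ∀ x, PSgX1 x = PS true * P1 x / (PS false * P0 x + PS true * P1 x))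
    (PSgY1 : Bool → ℝ)
    (hPSgY1 : ∀ y, PSgY1 y = PS true * Q1 y / (PS false * Q0 y + PS true * Q1 y))
    (θ0 : ℝ) (θ : Fin d → ℝ)
    (hlogX : ∀ x, PSgX1 x = (1 + Real.exp (θ0 + ∑ i, θ i * v x i))⁻¹)
    (γ0 γ1 : ℝ)
    (hlogY : ∀ y : Bool, PSgY1 y
      = (1 + Real.exp (γ0 + γ1 * (if y then (1 : ℝ) else 0)))⁻¹)
    (f : 𝒳 → ℝ)
    (hfmean : ∑ x, P0 x * f x = 0) (hfvar : ∑ x, P0 x * f x ^ 2 = 1)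
    (g : Bool → ℝ)
    (hg : ∀ y, g y = (∑ x, P0 x * W x y * f x) / Q0 y) :
    Tendsto
      (fun ε : ℝ =>
        (Lobj P0 P1 W Q0 Q1 l1 l2 l3 l4 f ε - Lobj P0 P1 W Q0 Q1 l1 l2 l3 l4 f 0) / ε)
      (nhdsWithin 0 (Set.Ioi 0))
      (nhds (l2 * ∑ i, θ i * (∑ x, P0 x * (f x * v x i))
        + l4 * γ1 * (∑ y, Q0 y * (g y * (if y then (1 : ℝ) else 0))))) := by
  set C : ℝ := Real.log (PS true) - Real.log (PS false) with hC
  set a : Bool → ℝ := fun y => ∑ x, P0 x * f x * W x y with haa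
  -- log-ratio identities
  have hlrX : ∀ x, Real.log (P0 x / P1 x) = (θ0 + ∑ i, θ i * v x i) + C :=
    fun x => logratio _ _ _ _ _ (hPSpos false) (hPSpos true) (hP0pos x) (hP1pos x)
      ((hPSgX1 x).symm.trans (hlogX x))
  have hlrY : ∀ y, Real.log (Q0 y / Q1 y) = (γ0 + γ1 * (if y then (1:ℝ) else 0)) + C :=
    fun y => logratio _ _ _ _ _ (hPSpos false) (hPSpos true) (hQ0pos y) (hQ1pos y)
      ((hPSgY1 y).symm.trans (hlogY y))
  -- rewrite Lobj in affine form
  have hFeq : ∀ ε : ℝ, Lobj P0 P1 W Q0 Q1 l1 l2 l3 l4 f ε =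
      l1 * (∑ x, (P0 x + ε * (P0 x * f x)) * Real.log ((P0 x + ε * (P0 x * f x)) / P0 x))
      + l2 * (∑ x, (P0 x + ε * (P0 x * f x)) * Real.log ((P0 x + ε * (P0 x * f x)) / P1 x))
      + l3 * (∑ y, (Q0 y + ε * a y) * Real.log ((Q0 y + ε * a y) / Q0 y))
      + l4 * (∑ y, (Q0 y + ε * a y) * Real.log ((Q0 y + ε * a y) / Q1 y)) := by
    intro ε
    have hx : ∀ (x : 𝒳), P0 x * (1 + ε * f x) = P0 x + ε * (P0 x * f x) :=
      fun x => by ring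
    have hy : ∀ y, (∑ x, (P0 x + ε * (P0 x * f x)) * W x y) = Q0 y + ε * a y := by
      intro y
      calc ∑ x, (P0 x + ε * (P0 x * f x)) * W x y
          = ∑ x, (P0 x * W x y + ε * (P0 x * f x * W x y)) :=
            Finset.sum_congr rfl (fun x _ => by ring)
        _ = (∑ x, P0 x * W x y) + ε * ∑ x, P0 x * f x * W x y := by
            rw [Finset.sum_add_distrib, Finset.mul_sum]
        _ = Q0 y + ε * a y := by rw [hQ0 y, haa]
    simp only [Lobj, KLdiv, hx, hy]
  -- derivative of each piece
  have h1 : HasDerivAt (fun ε : ℝ =>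
      ∑ x, (P0 x + ε * (P0 x * f x)) * Real.log ((P0 x + ε * (P0 x * f x)) / P0 x))
      (∑ x, (P0 x * f x) * (Real.log (P0 x / P0 x) + 1)) 0 :=
    HasDerivAt.fun_sum fun x _ => klterm_deriv _ _ _ (hP0pos x) (hP0pos x)
  have h2 : HasDerivAt (fun ε : ℝ =>
      ∑ x, (P0 x + ε * (P0 x * f x)) * Real.log ((P0 x + ε * (P0 x * f x)) / P1 x))
      (∑ x, (P0 x * f x) * (Real.log (P0 x / P1 x) + 1)) 0 :=
    HasDerivAt.fun_sum fun x _ => klterm_deriv _ _ _ (hP0pos x) (hP1pos x)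
  have h3 : HasDerivAt (fun ε : ℝ =>
      ∑ y, (Q0 y + ε * a y) * Real.log ((Q0 y + ε * a y) / Q0 y))
      (∑ y, (a y) * (Real.log (Q0 y / Q0 y) + 1)) 0 :=
    HasDerivAt.fun_sum fun y _ => klterm_deriv _ _ _ (hQ0pos y) (hQ0pos y)
  have h4 : HasDerivAt (fun ε : ℝ =>
      ∑ y, (Q0 y + ε * a y) * Real.log ((Q0 y + ε * a y) / Q1 y))
      (∑ y, (a y) * (Real.log (Q0 y / Q1 y) + 1)) 0 :=
    HasDerivAt.fun_sum fun y _ => klterm_deriv _ _ _ (hQ0pos y) (hQ1pos y)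
  have hD : HasDerivAt (fun ε => Lobj P0 P1 W Q0 Q1 l1 l2 l3 l4 f ε)
      (l1 * (∑ x, (P0 x * f x) * (Real.log (P0 x / P0 x) + 1))
       + l2 * (∑ x, (P0 x * f x) * (Real.log (P0 x / P1 x) + 1))
       + l3 * (∑ y, (a y) * (Real.log (Q0 y / Q0 y) + 1))
       + l4 * (∑ y, (a y) * (Real.log (Q0 y / Q1 y) + 1))) 0 := by
    have hsum := (((h1.const_mul l1).add (h2.const_mul l2)).add (h3.const_mul l3)).add
      (h4.const_mul l4)
    exact hsum.congr_of_eventuallyEq (Filter.Eventually.of_forall hFeq)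
  -- evaluate the four sums
  have hasum : a false + a true = 0 := by
    calc a false + a true
        = ∑ x, (P0 x * f x * W x false + P0 x * f x * W x true) := by
          rw [haa]; exact Finset.sum_add_distrib.symm
      _ = ∑ x, P0 x * f x :=
          Finset.sum_congr rfl fun x _ => by rw [← mul_add, hWsum x, mul_one]
      _ = 0 := hfmean
  have hS1 : (∑ x, (P0 x * f x) * (Real.log (P0 x / P0 x) + 1)) = 0 := by
    rw [Finset.sum_congr rfl fun x _ => by
      rw [div_self (hP0pos x).ne', Real.log_one, zero_add, mul_one]]
    exact hfmean
  have hS3 : (∑ y, (a y) * (Real.log (Q0 y / Q0 y) + 1)) = 0 := by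
    rw [Finset.sum_congr rfl fun y _ => by
      rw [div_self (hQ0pos y).ne', Real.log_one, zero_add, mul_one]]
    rw [Fintype.sum_bool]
    linarith
  have hS2 : (∑ x, (P0 x * f x) * (Real.log (P0 x / P1 x) + 1))
      = ∑ i, θ i * (∑ x, P0 x * (f x * v x i)) := by
    have e1 : ∀ x : 𝒳, (P0 x * f x) * (Real.log (P0 x / P1 x) + 1)
        = (∑ i, θ i * (P0 x * (f x * v x i))) + (P0 x * f x) * (θ0 + C + 1) := by
      intro x
      have hms : (P0 x * f x) * (∑ i, θ i * v x i)
          = ∑ i, θ i * (P0 x * (f x * v x i)) := by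
        rw [Finset.mul_sum]; exact Finset.sum_congr rfl fun i _ => by ring
      rw [hlrX x, ← hms]; ring
    rw [Finset.sum_congr rfl fun x _ => e1 x, Finset.sum_add_distrib]
    have hA : (∑ x, ∑ i, θ i * (P0 x * (f x * v x i)))
        = ∑ i, θ i * (∑ x, P0 x * (f x * v x i)) := by
      rw [Finset.sum_comm]
      exact Finset.sum_congr rfl fun i _ => (Finset.mul_sum _ _ _).symm
    have hB : (∑ x, (P0 x * f x) * (θ0 + C + 1)) = 0 := by
      rw [← Finset.sum_mul, hfmean, zero_mul]
    rw [hA, hB, add_zero]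
  have hS4 : (∑ y, (a y) * (Real.log (Q0 y / Q1 y) + 1)) = γ1 * a true := by
    have hneg : a false = - a true := by linarith
    rw [Fintype.sum_bool, hlrY true, hlrY false, hneg, if_pos rfl,
      if_neg (by simp : ¬ (false = true))]
    ring
  have htarget : (∑ y, Q0 y * (g y * (if y then (1:ℝ) else 0))) = a true := by
    have hfalse : Q0 false * (g false * (if (false:Bool) then (1:ℝ) else 0)) = 0 := by
      rw [if_neg (by simp : ¬ (false = true))]; ring
    have htrue : Q0 true * (g true * (if (true:Bool) then (1:ℝ) else 0)) = a true := by
      rw [if_pos rfl, mul_one, hg true, mul_div_cancel₀ _ (hQ0pos true).ne']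
      simp only [haa]
      exact Finset.sum_congr rfl fun x _ => by ring
    rw [Fintype.sum_bool, htrue, hfalse, add_zero]
  have hD2 : HasDerivAt (fun ε => Lobj P0 P1 W Q0 Q1 l1 l2 l3 l4 f ε)
      (l2 * ∑ i, θ i * (∑ x, P0 x * (f x * v x i))
        + l4 * γ1 * (∑ y, Q0 y * (g y * (if y then (1:ℝ) else 0)))) 0 := by
    convert hD using 1
    rw [hS1, hS2, hS3, hS4, htarget]
    ring
  have hslope := hasDerivAt_iff_tendsto_slope.mp hD2
  have hmono : nhdsWithin (0:ℝ) (Set.Ioi 0) ≤ nhdsWithin (0:ℝ) {(0:ℝ)}ᶜ :=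
    nhdsWithin_mono 0 (fun x hx => ne_of_gt hx)
  exact (hslope.mono_left hmono).congr fun ε => by rw [slope_def_field]; rw [sub_zero]
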